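/- Let x, y, z, q ∈ ℂ with x ≠ 0, q ∉ {0, 1, −1}, and set w = 1/(q x²). Assume xw, y, z ∉ {1, −1}, w ≠ q, and w ≠ q². Define V = (1/2)[1/((1−xw)(1−y)(1−z)) + 1/((1+xw)(1+y)(1+z))] and W = (1/2)[1/((1−xw)(1−y)(1−z)) − 1/((1+xw)(1+y)(1+z))]. Then (1 − q^{−1})(1 − w/q)^{−1} = (1 − q^{−2})(1 − w q^{−2})^{−1} · [1 + (1 + q^{−1})^{−1}(−1 + V − (x+y+z)W + (xy+xz+yz)V − xyz·W)]. -/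

import Mathlib

set_option maxHeartbeats 1000000 in
/-- The Euler-factor identity at primes `p ∣ a` verified in Section 6.3. -/
theorem euler_factor_identity_p_dvd_a (x y z q : ℂ) (hx0 : x ≠ 0)
    (hq0 : q ≠ 0) (hq1 : q ≠ 1) (hq1' : q ≠ -1) :
    let w : ℂ := 1 / (q * x ^ 2)
    ∀ (_ : x * w ≠ 1) (_ : x * w ≠ -1) (_ : y ≠ 1) (_ : y ≠ -1)
      (_ : z ≠ 1) (_ : z ≠ -1) (_ : w ≠ q) (_ : w ≠ q ^ 2),
    let V : ℂ := (1 / 2) * (1 / ((1 - x * w) * (1 - y) * (1 - z)) +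
      1 / ((1 + x * w) * (1 + y) * (1 + z)))
    let W : ℂ := (1 / 2) * (1 / ((1 - x * w) * (1 - y) * (1 - z)) -
      1 / ((1 + x * w) * (1 + y) * (1 + z)))
    (1 - q⁻¹) * (1 - w / q)⁻¹ =
      (1 - q⁻¹ ^ 2) * (1 - w * q⁻¹ ^ 2)⁻¹ *
        (1 + (1 + q⁻¹)⁻¹ *
          (-1 + V - (x + y + z) * W + (x * y + x * z + y * z) * V - x * y * z * W)) := by
  intro w h1 h2 h3 h4 h5 h6 h7 h8 V W
  have hw : w = 1/(q*x^2) := rfl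
  have hC : (1 : ℂ) - y ≠ 0 := sub_ne_zero.mpr (fun h => h3 h.symm)
  have hD : (1 : ℂ) + y ≠ 0 := by intro h; exact h4 (by linear_combination h)
  have hE : (1 : ℂ) - z ≠ 0 := sub_ne_zero.mpr (fun h => h5 h.symm)
  have hF : (1 : ℂ) + z ≠ 0 := by intro h; exact h6 (by linear_combination h)
  have hq1p : q + 1 ≠ 0 := fun h => hq1' (by linear_combination h)
  rw [hw] at h1 h2 h7 h8
  field_simp at h1 h2 h7 h8
  have k1 : 1 - q * x ≠ 0 := by
    intro h; exact h1 (by rw [div_eq_iff (mul_ne_zero hx0 hq0)]; linear_combination h)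
  have k2 : 1 + q * x ≠ 0 := by
    intro h; exact h2 (by rw [div_eq_iff (mul_ne_zero hx0 hq0)]; linear_combination h)
  have k3 : 1 - q ^ 2 * x ^ 2 ≠ 0 := by
    intro h; exact h7 (by rw [div_eq_iff (mul_ne_zero (pow_ne_zero 2 hx0) hq0)]; linear_combination h)
  have k4 : 1 - q ^ 3 * x ^ 2 ≠ 0 := by
    intro h; exact h8 (by rw [div_eq_iff (mul_ne_zero (pow_ne_zero 2 hx0) hq0)]; linear_combination h)
  have m1 : -(q ^ 2 * 2) - q ^ 3 * 2 + q ^ 5 * x ^ 2 * 2 + q ^ 6 * x ^ 2 * 2 ≠ 0 := by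
    have e : -(q ^ 2 * 2) - q ^ 3 * 2 + q ^ 5 * x ^ 2 * 2 + q ^ 6 * x ^ 2 * 2
        = -(2 * q ^ 2 * (q + 1) * (1 - q ^ 3 * x ^ 2)) := by ring
    rw [e]
    exact neg_ne_zero.mpr (mul_ne_zero (mul_ne_zero (mul_ne_zero two_ne_zero
      (pow_ne_zero 2 hq0)) hq1p) k4)
  have m2 : -q + q ^ 3 * x ^ 2 ≠ 0 := by
    have e : -q + q ^ 3 * x ^ 2 = -(q * (1 - q ^ 2 * x ^ 2)) := by ring
    rw [e]; exact neg_ne_zero.mpr (mul_ne_zero hq0 k3)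
  have m3 : q * x ^ 2 + q * x ^ 2 * y + q * x ^ 2 * y * z + q * x ^ 2 * z + x + x * y
      + x * y * z + x * z ≠ 0 := by
    have e : q * x ^ 2 + q * x ^ 2 * y + q * x ^ 2 * y * z + q * x ^ 2 * z + x + x * y
        + x * y * z + x * z = x * (1 + q * x) * ((1 + y) * (1 + z)) := by ring
    rw [e]; exact mul_ne_zero (mul_ne_zero hx0 k2) (mul_ne_zero hD hF)
  have m4 : q * x ^ 2 - q * x ^ 2 * y + q * x ^ 2 * y * z + (-(q * x ^ 2 * z) - x)
      + (x * y - x * y * z) + x * z ≠ 0 := by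
    have e : q * x ^ 2 - q * x ^ 2 * y + q * x ^ 2 * y * z + (-(q * x ^ 2 * z) - x)
        + (x * y - x * y * z) + x * z = -(x * (1 - q * x) * ((1 - y) * (1 - z))) := by ring
    rw [e]; exact neg_ne_zero.mpr (mul_ne_zero (mul_ne_zero hx0 k1) (mul_ne_zero hC hE))
  have n1 : q * x ^ 2 - x ≠ 0 := by
    have e : q * x ^ 2 - x = -(x * (1 - q * x)) := by ring
    rw [e]; exact neg_ne_zero.mpr (mul_ne_zero hx0 k1)
  have n2 : q * x ^ 2 + x ≠ 0 := by
    have e : q * x ^ 2 + x = x * (1 + q * x) := by ring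
    rw [e]; exact mul_ne_zero hx0 k2
  have n3 : q * x ^ 2 * q - 1 ≠ 0 := by
    have e : q * x ^ 2 * q - 1 = -(1 - q ^ 2 * x ^ 2) := by ring
    rw [e]; exact neg_ne_zero.mpr k3
  have n4 : q * x ^ 2 * q ^ 2 - 1 ≠ 0 := by
    have e : q * x ^ 2 * q ^ 2 - 1 = -(1 - q ^ 3 * x ^ 2) := by ring
    rw [e]; exact neg_ne_zero.mpr k4
  simp only [V, W]
  rw [hw]
  field_simp [n1, n2, n3, n4]
  have n5 : 2 * ((q * x ^ 2 - x) * (1 - y) * (1 - z) * ((q * x ^ 2 + x) * (1 + y) * (1 + z))) ≠ 0 :=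
    mul_ne_zero two_ne_zero (mul_ne_zero (mul_ne_zero (mul_ne_zero n1 hC) hE)
      (mul_ne_zero (mul_ne_zero n2 hD) hF))
  field_simp [n5, show q * x - 1 ≠ 0 from fun h => k1 (by linear_combination -h),
    show q * x + 1 ≠ 0 from fun h => k2 (by linear_combination h),
    show q ^ 2 * x ^ 2 - 1 ≠ 0 from fun h => k3 (by linear_combination -h),
    show q ^ 3 * x ^ 2 - 1 ≠ 0 from fun h => k4 (by linear_combination -h)]
  ring
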